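/- Let W be a valid n-partite process matrix on (H_I ⊗ H_O)^{⊗n}, each party having input space H_I and output space H_O, and let R be the map defined in the context. Then W^inv = (1/n!)·R(W) is a valid n-partite process matrix on the extended spaces in which party k has input H_I ⊗ ℂ^n and output H_O ⊗ H_{R_O}. -/

import Mathlib

open Matrix ComplexOrder

/-- Tensor product `M_1 ⊗ … ⊗ M_n` of a family of square matrices, realised on the
product index type. -/
noncomputable def tensorAll {n : ℕ} {γ : Fin n → Type} [∀ k, Fintype (γ k)]
    (M : ∀ k, Matrix (γ k) (γ k) ℂ) : Matrix (∀ k, γ k) (∀ k, γ k) ℂ :=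
  Matrix.of fun f f' => ∏ k, M k (f k) (f' k)

/-- Partial trace over the second (output) tensor factor. -/
noncomputable def ptraceOut {α β : Type} [Fintype β]
    (M : Matrix (α × β) (α × β) ℂ) : Matrix α α ℂ :=
  Matrix.of fun a a' => ∑ b, M (a, b) (a', b)

/-- A valid `n`-partite process matrix on `⨂_k (H_{I_k} ⊗ H_{O_k})`: a positive
semidefinite operator `W` such that `Tr[W·(M_1 ⊗ … ⊗ M_n)] = 1` for every choice of
positive semidefinite `M_k` with `Tr_{O_k}[M_k] = 1_{I_k}` (Choi matrices of CPTP maps). -/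
def IsProcessMatrix {n : ℕ} {ι κ : Fin n → Type}
    [∀ k, Fintype (ι k)] [∀ k, Fintype (κ k)] [∀ k, DecidableEq (ι k)]
    (W : Matrix (∀ k, ι k × κ k) (∀ k, ι k × κ k) ℂ) : Prop :=
  W.PosSemidef ∧
    ∀ M : ∀ k, Matrix (ι k × κ k) (ι k × κ k) ℂ,
      (∀ k, (M k).PosSemidef) → (∀ k, ptraceOut (M k) = 1) →
        (W * tensorAll M).trace = 1

/-- The operator `W ⊗ [01…(n−1)]^{R_I} ⊗ 1^{R_O}` with tensor factors reordered so that
party `k` carries input `H_I ⊗ ℂ^n` (basis `Fin dI × Fin n`) and output `H_O ⊗ H_{R_O}`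
(basis `Fin dO × Fin dR`).  `[01…(n−1)]` is the rank-one projector onto
`|0⟩⊗|1⟩⊗…⊗|n−1⟩` in `(ℂ^n)^{⊗n}`. -/
noncomputable def extendW (n dI dO dR : ℕ)
    (A : Matrix (Fin n → Fin dI × Fin dO) (Fin n → Fin dI × Fin dO) ℂ) :
    Matrix (Fin n → (Fin dI × Fin n) × (Fin dO × Fin dR))
      (Fin n → (Fin dI × Fin n) × (Fin dO × Fin dR)) ℂ :=
  Matrix.of fun f f' =>
    A (fun k => ((f k).1.1, (f k).2.1)) (fun k => ((f' k).1.1, (f' k).2.1)) *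
      (if (∀ k, (f k).1.2 = k) ∧ (∀ k, (f' k).1.2 = k) then 1 else 0) *
      (if (fun k => (f k).2.2) = (fun k => (f' k).2.2) then 1 else 0)

/-- The unitary `U_g^{SR}` jointly permuting, according to `g ∈ S_n`, the `n` extended
party factors (each carrying the system factor `H_I ⊗ H_O` together with its reference
factor `ℂ^n ⊗ H_{R_O}`). -/
noncomputable def permSR (n dI dO dR : ℕ) (g : Equiv.Perm (Fin n)) :
    Matrix (Fin n → (Fin dI × Fin n) × (Fin dO × Fin dR))
      (Fin n → (Fin dI × Fin n) × (Fin dO × Fin dR)) ℂ :=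
  Matrix.of fun p q => if q = p ∘ g then 1 else 0

/-- `R(A) = Σ_{g ∈ S_n} U_g^{SR} (A ⊗ [01…(n−1)]^{R_I} ⊗ 1^{R_O}) (U_g^{SR})†`. -/
noncomputable def Rmap (n dI dO dR : ℕ)
    (A : Matrix (Fin n → Fin dI × Fin dO) (Fin n → Fin dI × Fin dO) ℂ) :
    Matrix (Fin n → (Fin dI × Fin n) × (Fin dO × Fin dR))
      (Fin n → (Fin dI × Fin n) × (Fin dO × Fin dR)) ℂ :=
  ∑ g : Equiv.Perm (Fin n),
    permSR n dI dO dR g * extendW n dI dO dR A * (permSR n dI dO dR g)ᴴ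

/-! ### Auxiliary lemmas -/

lemma psd_add {S : Type} [Fintype S] {A B : Matrix S S ℂ}
    (hA : A.PosSemidef) (hB : B.PosSemidef) : (A + B).PosSemidef := by
  rw [Matrix.posSemidef_iff_dotProduct_mulVec]
  constructor
  · show _ = _
    rw [Matrix.conjTranspose_add, hA.1, hB.1]
  · intro x
    rw [Matrix.add_mulVec, dotProduct_add]
    exact add_nonneg (hA.dotProduct_mulVec_nonneg x) (hB.dotProduct_mulVec_nonneg x)

lemma psd_sum {ι S : Type} [Fintype ι] [Fintype S] (f : ι → Matrix S S ℂ)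
    (h : ∀ i, (f i).PosSemidef) : (∑ i, f i).PosSemidef :=
  Finset.sum_induction f _ (fun _ _ ha hb => psd_add ha hb) Matrix.PosSemidef.zero
    (fun i _ => h i)

lemma psd_real_smul {S : Type} [Fintype S] (c : ℝ) (hc : 0 ≤ c)
    {M : Matrix S S ℂ} (hM : M.PosSemidef) : ((c : ℂ) • M).PosSemidef := by
  rw [Matrix.posSemidef_iff_dotProduct_mulVec]
  constructor
  · show _ = _
    rw [Matrix.conjTranspose_smul, Complex.star_def, Complex.conj_ofReal, hM.1]
  · intro x
    rw [Matrix.smul_mulVec, dotProduct_smul, smul_eq_mul]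
    exact mul_nonneg (by exact_mod_cast hc) (hM.dotProduct_mulVec_nonneg x)

lemma ptraceOut_posSemidef {α β : Type} [Fintype α] [Fintype β] [DecidableEq α] [DecidableEq β]
    {M : Matrix (α × β) (α × β) ℂ} (hM : M.PosSemidef) : (ptraceOut M).PosSemidef := by
  rw [Matrix.posSemidef_iff_dotProduct_mulVec]
  constructor
  · ext a a'
    simp only [conjTranspose_apply, ptraceOut, of_apply, star_sum]
    exact Finset.sum_congr rfl fun b _ => hM.1.apply _ _
  · intro x
    have key : star x ⬝ᵥ ptraceOut M *ᵥ x
        = ∑ b : β, star (fun q : α × β => if q.2 = b then x q.1 else 0) ⬝ᵥ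
            M *ᵥ (fun q : α × β => if q.2 = b then x q.1 else 0) := by
      simp only [dotProduct, Matrix.mulVec, ptraceOut, of_apply, Pi.star_apply,
        Fintype.sum_prod_type, apply_ite (star : ℂ → ℂ), star_zero, ite_mul, mul_ite,
        zero_mul, mul_zero, Finset.sum_ite_eq, Finset.sum_ite_eq', Finset.mem_univ, if_true]
      rw [Finset.sum_comm]
      refine Finset.sum_congr rfl fun a _ => ?_
      simp only [Finset.mul_sum, Finset.sum_mul]
      rw [Finset.sum_comm]
    rw [key]
    exact Finset.sum_nonneg fun b _ => hM.dotProduct_mulVec_nonneg _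

/-- Embedding of a system configuration and a reference-output configuration into the
extended index type (reference inputs set to `|01…(n-1)⟩`). -/
def emb {n dI dO dR : ℕ} (p : Fin n → Fin dI × Fin dO) (r : Fin n → Fin dR) :
    Fin n → (Fin dI × Fin n) × (Fin dO × Fin dR) :=
  fun k => (((p k).1, k), ((p k).2, r k))

def tripEquiv (n dI dO dR : ℕ) :
    ((Fin n → Fin dI × Fin dO) × (Fin n → Fin n) × (Fin n → Fin dR)) ≃
      (Fin n → (Fin dI × Fin n) × (Fin dO × Fin dR)) where
  toFun x := fun k => (((x.1 k).1, x.2.1 k), ((x.1 k).2, x.2.2 k))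
  invFun f := (fun k => ((f k).1.1, (f k).2.1), fun k => (f k).1.2, fun k => (f k).2.2)
  left_inv _ := rfl
  right_inv _ := rfl

lemma collapse_id {n : ℕ} {β : Type} [Fintype β] [DecidableEq β] (g : Fin n → β)
    (F : (Fin n → β) → ℂ) :
    (∑ t : Fin n → β, if (∀ k, t k = g k) then F t else 0) = F g := by
  rw [Finset.sum_eq_single g]
  · simp
  · intro t _ ht
    rw [if_neg]
    intro h
    exact ht (funext h)
  · simp

lemma trace_mul_iter {S : Type} [Fintype S] (C D : Matrix S S ℂ) :
    (C * D).trace = ∑ p, ∑ p', C p p' * D p' p := by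
  simp [Matrix.trace, Matrix.diag, Matrix.mul_apply]

lemma trace_mul_pair {S : Type} [Fintype S] (C D : Matrix S S ℂ) :
    (C * D).trace = ∑ z : S × S, C z.1 z.2 * D z.2 z.1 := by
  rw [Fintype.sum_prod_type, trace_mul_iter]

/-- The master computation: a trace against `extendW A` reduces to sums over
embedded configurations. -/
lemma trace_extendW_mul (n dI dO dR : ℕ)
    (A : Matrix (Fin n → Fin dI × Fin dO) (Fin n → Fin dI × Fin dO) ℂ)
    (B : Matrix (Fin n → (Fin dI × Fin n) × (Fin dO × Fin dR))
      (Fin n → (Fin dI × Fin n) × (Fin dO × Fin dR)) ℂ) :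
    (extendW n dI dO dR A * B).trace
      = ∑ r : Fin n → Fin dR, ∑ p, ∑ p', A p p' * B (emb p' r) (emb p r) := by
  classical
  have h1 : (extendW n dI dO dR A * B).trace
      = ∑ y : (Fin n → (Fin dI × Fin n) × (Fin dO × Fin dR)) ×
          (Fin n → (Fin dI × Fin n) × (Fin dO × Fin dR)),
          extendW n dI dO dR A y.1 y.2 * B y.2 y.1 := trace_mul_pair _ _
  have h2 := Fintype.sum_equiv
      (Equiv.prodCongr (tripEquiv n dI dO dR) (tripEquiv n dI dO dR))
      (fun x : ((Fin n → Fin dI × Fin dO) × (Fin n → Fin n) × (Fin n → Fin dR)) ×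
          ((Fin n → Fin dI × Fin dO) × (Fin n → Fin n) × (Fin n → Fin dR)) =>
        (A x.1.1 x.2.1 *
          (if (∀ k, x.1.2.1 k = k) ∧ (∀ k, x.2.2.1 k = k) then (1:ℂ) else 0) *
          (if x.1.2.2 = x.2.2.2 then (1:ℂ) else 0)) *
          B (tripEquiv n dI dO dR x.2) (tripEquiv n dI dO dR x.1))
      (fun y => extendW n dI dO dR A y.1 y.2 * B y.2 y.1)
      (fun x => rfl)
  rw [h1, ← h2]
  have key : ∀ (p p' : Fin n → Fin dI × Fin dO) (t t' : Fin n → Fin n)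
      (r r' : Fin n → Fin dR),
      (A p p' * (if (∀ k, t k = k) ∧ (∀ k, t' k = k) then (1:ℂ) else 0) *
        (if r = r' then (1:ℂ) else 0)) *
        B (tripEquiv n dI dO dR (p', t', r')) (tripEquiv n dI dO dR (p, t, r))
      = if r = r' then (if (∀ k, t' k = k) then (if (∀ k, t k = k) then
          A p p' * B (tripEquiv n dI dO dR (p', t', r')) (tripEquiv n dI dO dR (p, t, r))
          else 0) else 0) else 0 := by
    intro p p' t t' r r'
    by_cases hD : r = r'
    · by_cases hC : (∀ k, t k = k)
      · by_cases hC' : (∀ k, t' k = k)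
        · rw [if_pos ⟨hC, hC'⟩, if_pos hD, if_pos hD, if_pos hC', if_pos hC]; ring
        · rw [if_neg (by tauto), if_pos hD, if_pos hD, if_neg hC']; ring
      · by_cases hC' : (∀ k, t' k = k)
        · rw [if_neg (by tauto), if_pos hD, if_pos hD, if_pos hC', if_neg hC]; ring
        · rw [if_neg (by tauto), if_pos hD, if_pos hD, if_neg hC']; ring
    · rw [if_neg hD, if_neg hD]; ring
  simp only [Fintype.sum_prod_type]
  simp only [key]
  calc ∑ p, ∑ t, ∑ r, ∑ p', ∑ t', ∑ r',
        (if r = r' then (if (∀ k, t' k = k) then (if (∀ k, t k = k) then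
          A p p' * B (tripEquiv n dI dO dR (p', t', r')) (tripEquiv n dI dO dR (p, t, r))
          else 0) else 0) else 0)
      = ∑ p, ∑ t : Fin n → Fin n, ∑ r : Fin n → Fin dR,
          (if (∀ k, t k = k) then (∑ p', A p p' * B (emb p' r) (emb p r)) else (0:ℂ)) := by
        refine Finset.sum_congr rfl fun p _ => Finset.sum_congr rfl fun t _ =>
          Finset.sum_congr rfl fun r _ => ?_
        by_cases hC : (∀ k, t k = k)
        · have ht : t = fun k => k := funext hC
          subst ht
          rw [if_pos hC]
          refine Finset.sum_congr rfl fun p' _ => ?_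
          simp only [Finset.sum_ite_eq, Finset.mem_univ, if_true]
          simp only [collapse_id]
          rw [if_pos (fun _ => trivial : Fin n → True)]
          rfl
        · rw [if_neg hC]
          simp [hC]
    _ = ∑ p, ∑ r : Fin n → Fin dR, ∑ p', A p p' * B (emb p' r) (emb p r) := by
        refine Finset.sum_congr rfl fun p _ => ?_
        rw [Finset.sum_comm]
        refine Finset.sum_congr rfl fun r _ => ?_
        exact collapse_id (fun k => k) _
    _ = ∑ r : Fin n → Fin dR, ∑ p, ∑ p', A p p' * B (emb p' r) (emb p r) :=
        Finset.sum_comm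

/-- `extendW` of a positive semidefinite matrix is positive semidefinite. -/
lemma extendW_posSemidef (n dI dO dR : ℕ)
    {A : Matrix (Fin n → Fin dI × Fin dO) (Fin n → Fin dI × Fin dO) ℂ}
    (hA : A.PosSemidef) : (extendW n dI dO dR A).PosSemidef := by
  rw [Matrix.posSemidef_iff_dotProduct_mulVec]
  constructor
  · ext f f'
    simp only [conjTranspose_apply, extendW, of_apply, star_mul',
      apply_ite (star : ℂ → ℂ), star_one, star_zero]
    rw [hA.1.apply]
    rw [if_congr (and_comm (a := ∀ k, (f' k).1.2 = k) (b := ∀ k, (f k).1.2 = k)) rfl rfl,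
      if_congr (eq_comm (a := fun k => (f' k).2.2) (b := fun k => (f k).2.2)) rfl rfl]
  · intro x
    have hq : star x ⬝ᵥ extendW n dI dO dR A *ᵥ x
        = (extendW n dI dO dR A * vecMulVec x (star x)).trace := by
      rw [trace_mul_iter]
      simp only [dotProduct, Matrix.mulVec, vecMulVec_apply, Pi.star_apply,
        Finset.mul_sum]
      refine Finset.sum_congr rfl fun f _ => Finset.sum_congr rfl fun f' _ => by ring
    rw [hq, trace_extendW_mul]
    refine Finset.sum_nonneg fun r _ => ?_
    have h := hA.dotProduct_mulVec_nonneg (fun p => x (emb p r))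
    have he : star (fun p => x (emb p r)) ⬝ᵥ A *ᵥ (fun p => x (emb p r))
        = ∑ p, ∑ p', A p p' * vecMulVec x (star x) (emb p' r) (emb p r) := by
      simp only [dotProduct, Matrix.mulVec, vecMulVec_apply, Pi.star_apply,
        Finset.mul_sum]
      refine Finset.sum_congr rfl fun p _ => Finset.sum_congr rfl fun p' _ => by ring
    rw [he] at h
    exact h

/-- Conjugation by `permSR g` is reindexing by `· ∘ g`. -/
lemma permSR_conj (n dI dO dR : ℕ) (g : Equiv.Perm (Fin n))
    (A : Matrix (Fin n → (Fin dI × Fin n) × (Fin dO × Fin dR))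
      (Fin n → (Fin dI × Fin n) × (Fin dO × Fin dR)) ℂ) :
    permSR n dI dO dR g * A * (permSR n dI dO dR g)ᴴ
      = A.submatrix (· ∘ ⇑g) (· ∘ ⇑g) := by
  ext p q
  simp [Matrix.mul_apply, permSR, conjTranspose_apply, apply_ite (star : ℂ → ℂ),
    ite_mul, mul_ite, zero_mul, mul_zero, one_mul, mul_one]

def compArr {X : Type} {n : ℕ} (g : Equiv.Perm (Fin n)) : (Fin n → X) ≃ (Fin n → X) where
  toFun f := f ∘ ⇑g
  invFun f := f ∘ ⇑g.symm
  left_inv f := by funext k; simp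
  right_inv f := by funext k; simp

lemma trace_submatrix_perm {X : Type} [Fintype X] [DecidableEq X] {n : ℕ}
    (C : Matrix (Fin n → X) (Fin n → X) ℂ) (g : Equiv.Perm (Fin n))
    (N : Fin n → Matrix X X ℂ) :
    (C.submatrix (· ∘ ⇑g) (· ∘ ⇑g) * tensorAll N).trace
      = (C * tensorAll (fun k => N (g k))).trace := by
  rw [trace_mul_pair, trace_mul_pair]
  refine Fintype.sum_equiv (Equiv.prodCongr (compArr g) (compArr g)) _ _ fun z => ?_
  show C (z.1 ∘ ⇑g) (z.2 ∘ ⇑g) * (∏ k, N k (z.2 k) (z.1 k))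
      = C (z.1 ∘ ⇑g) (z.2 ∘ ⇑g) * ∏ k, N (g k) (z.2 (g k)) (z.1 (g k))
  exact congrArg _ (Equiv.prod_comp g fun k => N k (z.2 k) (z.1 k)).symm

/-- Restriction of an extended-party matrix: fix the reference input to `j` and
partial-trace the reference output. -/
noncomputable def compress {n dI dO dR : ℕ}
    (N : Matrix ((Fin dI × Fin n) × (Fin dO × Fin dR))
      ((Fin dI × Fin n) × (Fin dO × Fin dR)) ℂ) (j : Fin n) :
    Matrix (Fin dI × Fin dO) (Fin dI × Fin dO) ℂ :=
  ptraceOut (N.submatrix (fun q : (Fin dI × Fin dO) × Fin dR => ((q.1.1, j), (q.1.2, q.2)))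
    (fun q => ((q.1.1, j), (q.1.2, q.2))))

lemma compress_posSemidef {n dI dO dR : ℕ}
    {N : Matrix ((Fin dI × Fin n) × (Fin dO × Fin dR))
      ((Fin dI × Fin n) × (Fin dO × Fin dR)) ℂ} (hN : N.PosSemidef) (j : Fin n) :
    (compress N j).PosSemidef :=
  ptraceOut_posSemidef (hN.submatrix _)

lemma compress_ptrace {n dI dO dR : ℕ}
    {N : Matrix ((Fin dI × Fin n) × (Fin dO × Fin dR))
      ((Fin dI × Fin n) × (Fin dO × Fin dR)) ℂ} (hN : ptraceOut N = 1) (j : Fin n) :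
    ptraceOut (compress N j) = 1 := by
  ext a a'
  have h := congrFun (congrFun (congrArg (fun (M : Matrix (Fin dI × Fin n) (Fin dI × Fin n) ℂ)
    => (M : Matrix _ _ ℂ)) hN) (a, j)) (a', j)
  simp only [ptraceOut, of_apply, Fintype.sum_prod_type] at h
  show (∑ b : Fin dO, ∑ v : Fin dR, N ((a, j), (b, v)) ((a', j), (b, v))) = (1 : Matrix _ _ ℂ) a a'
  rw [h]
  by_cases ha : a = a'
  · subst ha; simp
  · rw [Matrix.one_apply_ne (by simpa using ha), Matrix.one_apply_ne (by simp [ha, Prod.ext_iff])]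

lemma trace_extendW_tensorAll (n dI dO dR : ℕ)
    (A : Matrix (Fin n → Fin dI × Fin dO) (Fin n → Fin dI × Fin dO) ℂ)
    (N : Fin n → Matrix ((Fin dI × Fin n) × (Fin dO × Fin dR))
      ((Fin dI × Fin n) × (Fin dO × Fin dR)) ℂ) :
    (extendW n dI dO dR A * tensorAll N).trace
      = (A * tensorAll (fun j => compress (N j) j)).trace := by
  rw [trace_extendW_mul, trace_mul_iter]
  have hc : ∀ p p' : Fin n → Fin dI × Fin dO,
      (∏ k, compress (N k) k (p' k) (p k))
        = ∑ r : Fin n → Fin dR, ∏ k, N k (emb p' r k) (emb p r k) := by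
    intro p p'
    have : ∀ k, compress (N k) k (p' k) (p k)
        = ∑ v : Fin dR, N k ((((p' k).1), k), ((p' k).2, v)) ((((p k).1), k), ((p k).2, v)) :=
      fun k => rfl
    simp only [this]
    rw [Fintype.prod_sum]
    rfl
  calc ∑ r : Fin n → Fin dR, ∑ p, ∑ p', A p p' * tensorAll N (emb p' r) (emb p r)
      = ∑ p, ∑ r : Fin n → Fin dR, ∑ p', A p p' * tensorAll N (emb p' r) (emb p r) :=
        Finset.sum_comm
    _ = ∑ p, ∑ p', A p p' * tensorAll (fun j => compress (N j) j) p' p := by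
        refine Finset.sum_congr rfl fun p _ => ?_
        rw [Finset.sum_comm]
        refine Finset.sum_congr rfl fun p' _ => ?_
        show (∑ r : Fin n → Fin dR, A p p' * ∏ k, N k (emb p' r k) (emb p r k))
            = A p p' * ∏ k, compress (N k) k (p' k) (p k)
        rw [hc, Finset.mul_sum]

theorem invariant_process_is_process (n dI dO dR : ℕ)
    (W : Matrix (Fin n → Fin dI × Fin dO) (Fin n → Fin dI × Fin dO) ℂ)
    (hW : IsProcessMatrix (ι := fun _ => Fin dI) (κ := fun _ => Fin dO) W) :
    IsProcessMatrix (ι := fun _ => Fin dI × Fin n) (κ := fun _ => Fin dO × Fin dR)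
      (((n.factorial : ℂ))⁻¹ • Rmap n dI dO dR W) := by
  classical
  have hcast : ((n.factorial : ℂ))⁻¹ = (((n.factorial : ℝ)⁻¹ : ℝ) : ℂ) := by
    push_cast
    ring
  constructor
  · rw [hcast]
    refine psd_real_smul _ (by positivity) ?_
    refine psd_sum _ fun g => ?_
    rw [permSR_conj]
    exact (extendW_posSemidef n dI dO dR hW.1).submatrix _
  · intro M hMpsd hMtr
    have hterm : ∀ g : Equiv.Perm (Fin n),
        ((permSR n dI dO dR g * extendW n dI dO dR W * (permSR n dI dO dR g)ᴴ)
          * tensorAll M).trace = 1 := by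
      intro g
      rw [permSR_conj, trace_submatrix_perm, trace_extendW_tensorAll]
      exact hW.2 (fun j => compress (M (g j)) j)
        (fun j => compress_posSemidef (hMpsd (g j)) j)
        (fun j => compress_ptrace (hMtr (g j)) j)
    rw [Matrix.smul_mul, Matrix.trace_smul, Rmap, Finset.sum_mul, Matrix.trace_sum]
    rw [Finset.sum_congr rfl fun g _ => hterm g]
    simp only [Finset.sum_const, Finset.card_univ, Fintype.card_perm, Fintype.card_fin,
      nsmul_eq_mul, mul_one, smul_eq_mul]
    exact inv_mul_cancel₀ (by exact_mod_cast n.factorial_ne_zero)
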